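/- Let P be a hereditary graph class, let G be a finite graph that does not belong to P, and let Z be a set of at least two vertices of G such that every forbidden set X of G contains Z and the induced subgraph G[X] is biconnected. Then for every maximal P set S of G with Z ⊆ S, all vertices of Z lie in the same connected component of G[S]. -/
import Mathlib


attribute [local instance] Classical.propDecidable

/-- A *graph class*: a collection of finite simple graphs, given as a property of
simple graphs over every finite vertex type. -/
abbrev GraphClass : Type 1 :=
  ∀ (V : Type) [Fintype V], SimpleGraph V → Prop

/-- The graph class is a nonempty collection of graphs. -/
def GraphClass.NonemptyClass (P : GraphClass) : Prop :=
  ∃ (V : Type) (_ : Fintype V) (G : SimpleGraph V), P V G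

/-- The graph class is closed under isomorphism. -/
def GraphClass.IsoClosed (P : GraphClass) : Prop :=
  ∀ (V W : Type) (_ : Fintype V) (_ : Fintype W) (G : SimpleGraph V) (H : SimpleGraph W),
    _root_.Nonempty (G ≃g H) → (P V G ↔ P W H)

/-- The graph class is hereditary: it is closed under taking induced subgraphs. -/
def GraphClass.Hereditary (P : GraphClass) : Prop :=
  ∀ (V : Type) (_ : Fintype V) (G : SimpleGraph V) (S : Set V),
    P V G → P (↥S) (G.induce S)

variable {V : Type} [Fintype V]

/-- `S ⊆ V(G)` is a `P` set of `G` if the induced subgraph `G[S]` belongs to `P`. -/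
def IsPSet (P : GraphClass) (G : SimpleGraph V) (S : Set V) : Prop :=
  P (↥S) (G.induce S)

/-- `S` is a maximal `P` set of `G`: a `P` set with no proper superset that is a `P` set. -/
def IsMaxPSet (P : GraphClass) (G : SimpleGraph V) (S : Set V) : Prop :=
  IsPSet P G S ∧ ∀ T : Set V, S ⊂ T → ¬ IsPSet P G T

/-- `S` is a connected `P` set of `G`: a `P` set inducing a connected subgraph. -/
def IsConnPSet (P : GraphClass) (G : SimpleGraph V) (S : Set V) : Prop :=
  IsPSet P G S ∧ (G.induce S).Connected

/-- `S` is a maximal connected `P` set of `G`: a connected `P` set contained in no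
strictly larger connected `P` set. -/
def IsMaxConnPSet (P : GraphClass) (G : SimpleGraph V) (S : Set V) : Prop :=
  IsConnPSet P G S ∧ ∀ T : Set V, S ⊂ T → ¬ IsConnPSet P G T

/-- A forbidden set of `G` (with respect to the class `P`): an inclusion-minimal vertex
set inducing a subgraph that is not in `P`. -/
def IsForbiddenSet (P : GraphClass) (G : SimpleGraph V) (X : Set V) : Prop :=
  ¬ IsPSet P G X ∧ ∀ Y : Set V, Y ⊂ X → IsPSet P G Y

/-- A finite graph is biconnected if it is connected and remains connected after the
deletion of any single vertex. -/
def IsBiconnected {W : Type} (H : SimpleGraph W) : Prop :=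
  H.Connected ∧ ∀ w : W, (H.induce {x | x ≠ w}).Connected

/-- Subsets of `P` sets are `P` sets. -/
lemma subset_isPSet (P : GraphClass) (hiso : P.IsoClosed) (hher : P.Hereditary)
    {V : Type} [Fintype V] (G : SimpleGraph V) {X T : Set V} (hXT : X ⊆ T)
    (hT : IsPSet P G T) : IsPSet P G X := by
  have h := hher _ _ (G.induce T) {x : ↥T | ↑x ∈ X} hT
  refine (hiso _ _ _ _ _ _ ⟨?_⟩).mp h
  exact
    { toFun := fun a => (⟨a.1.1, a.2⟩ : ↥X)
      invFun := fun a => ⟨⟨↑a, hXT a.2⟩, a.2⟩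
      left_inv := fun a => Subtype.ext (Subtype.ext rfl)
      right_inv := fun a => Subtype.ext rfl
      map_rel_iff' := fun {a b} => Iff.rfl }

/-- Every non-`P` set contains a forbidden set. -/
lemma exists_forbidden_subset (P : GraphClass) {V : Type} [Fintype V] (G : SimpleGraph V) :
    ∀ (T : Set V), ¬ IsPSet P G T → ∃ X, X ⊆ T ∧ IsForbiddenSet P G X := by
  have key : ∀ n (T : Set V), T.ncard ≤ n → ¬ IsPSet P G T →
      ∃ X, X ⊆ T ∧ IsForbiddenSet P G X := by
    intro n
    induction n with
    | zero =>
      intro T hTn hT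
      refine ⟨T, subset_rfl, hT, fun Y hY => ?_⟩
      have hTe : T = ∅ := by
        have := Set.ncard_eq_zero (Set.toFinite T) |>.mp (Nat.le_zero.mp hTn)
        exact this
      rw [hTe] at hY
      exact absurd (Set.empty_subset Y) hY.2
    | succ n ih =>
      intro T hTn hT
      by_cases h : ∃ Y, Y ⊂ T ∧ ¬ IsPSet P G Y
      · obtain ⟨Y, hYT, hY⟩ := h
        have hlt : Y.ncard < T.ncard := Set.ncard_lt_ncard hYT (Set.toFinite T)
        obtain ⟨X, hXY, hX⟩ := ih Y (by omega) hY
        exact ⟨X, hXY.trans hYT.subset, hX⟩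
      · push_neg at h
        exact ⟨T, subset_rfl, hT, h⟩
  exact fun T => key T.ncard T le_rfl

/-- Let `P` be a hereditary graph class, `G ∉ P` a finite graph, and
`Z` a set of at least two vertices of `G` such that every forbidden set `X` of `G`
contains `Z` and induces a biconnected subgraph.  Then in every maximal `P` set `S` of
`G` with `Z ⊆ S`, all vertices of `Z` lie in the same connected component of `G[S]`. -/
theorem Z_in_one_component_of_maxPSet
    (P : GraphClass) (hne : P.NonemptyClass) (hiso : P.IsoClosed) (hher : P.Hereditary)
    {V : Type} [Fintype V] (G : SimpleGraph V) (hGP : ¬ P V G)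
    (Z : Set V) (hZ2 : 2 ≤ Z.ncard)
    (hforb : ∀ X : Set V, IsForbiddenSet P G X → Z ⊆ X ∧ IsBiconnected (G.induce X)) :
    ∀ S : Set V, IsMaxPSet P G S → ∀ hZS : Z ⊆ S,
      ∀ (z z' : V) (hz : z ∈ Z) (hz' : z' ∈ Z),
        (G.induce S).Reachable ⟨z, hZS hz⟩ ⟨z', hZS hz'⟩ := by
  intro S hS hZS z z' hz hz'
  have hSP : IsPSet P G S := hS.1
  have hUniv : ¬ IsPSet P G Set.univ := fun h =>
    hGP ((hiso _ _ _ _ _ _ ⟨G.induceUnivIso⟩).mp h)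
  obtain ⟨v, hv⟩ : ∃ v, v ∉ S := by
    by_contra h
    push_neg at h
    have : S = Set.univ := Set.eq_univ_of_forall h
    exact hUniv (this ▸ hSP)
  have hTnP : ¬ IsPSet P G (insert v S) := hS.2 _ (Set.ssubset_insert hv)
  obtain ⟨X, hXT, hXf⟩ := exists_forbidden_subset P G _ hTnP
  obtain ⟨hZX, hbic⟩ := hforb X hXf
  have hvX : v ∈ X := by
    by_contra hvX
    have hXS : X ⊆ S := by
      intro x hx
      rcases hXT hx with rfl | hxS
      · exact absurd hx hvX
      · exact hxS
    exact hXf.1 (subset_isPSet P hiso hher G hXS hSP)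
  have hconn := hbic.2 ⟨v, hvX⟩
  have hzX : z ∈ X := hZX hz
  have hz'X : z' ∈ X := hZX hz'
  have hzne : (⟨z, hzX⟩ : ↥X) ≠ ⟨v, hvX⟩ := by
    intro h
    have h2 : z = v := congrArg Subtype.val h
    exact hv (h2 ▸ hZS hz)
  have hz'ne : (⟨z', hz'X⟩ : ↥X) ≠ ⟨v, hvX⟩ := by
    intro h
    have h2 : z' = v := congrArg Subtype.val h
    exact hv (h2 ▸ hZS hz')
  let f : ((G.induce X).induce {x | x ≠ (⟨v, hvX⟩ : ↥X)}) →g G.induce S :=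
    { toFun := fun a => (⟨a.1.1, by
        rcases hXT a.1.2 with h | h
        · exact absurd (Subtype.ext h) a.2
        · exact h⟩ : ↥S)
      map_rel' := fun {a b} hab => hab }
  have r := hconn.preconnected ⟨⟨z, hzX⟩, hzne⟩ ⟨⟨z', hz'X⟩, hz'ne⟩
  exact r.map f
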